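/- (Leave-out shortcut for Setting D of two-step kernel ridge regression.) Let m, q ≥ 2, let K be an m×m and G a q×q symmetric positive semidefinite real matrix, Y ∈ ℝ^{m×q}, λ_d, λ_t > 0, H^k = K(K + λ_d I)⁻¹, and H^g = G(G + λ_t I)⁻¹. Fix indices i and j. Let K^{(i)} be K with row and column i deleted, κ_i the i-th row of K with entry i deleted, G^{(j)} be G with row and column j deleted, γ_j the j-th column of G with entry j deleted, and Y^{(i,j)} be Y with row i and column j deleted. Then κ_iᵀ (K^{(i)} + λ_d I)⁻¹ Y^{(i,j)} (G^{(j)} + λ_t I)⁻¹ γ_j = [ H^k_{i·}(Y H^g_{·j} − Y_{·j} H^g_{jj}) − H^k_{ii}(Y_{i·} H^g_{·j} − Y_{ij} H^g_{jj}) ] / [ (1 − H^k_{ii})(1 − H^g_{jj}) ]. -/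

import Mathlib

open Matrix

section KRRAux

variable {n : Type*} [Fintype n] [DecidableEq n]

lemma myPosDef_smul_one {l : ℝ} (hl : 0 < l) : ((l • 1 : Matrix n n ℝ)).PosDef := by
  have h : (l • 1 : Matrix n n ℝ) = Matrix.diagonal (fun _ => l) := by
    ext x y
    by_cases hxy : x = y <;> simp [Matrix.one_apply, Matrix.diagonal, hxy]
  rw [h]
  exact Matrix.PosDef.diagonal (fun _ => hl)

lemma myDiagPos {M : Matrix n n ℝ} (hM : M.PosDef) (i : n) : 0 < M i i := by
  have h := hM.dotProduct_mulVec_pos (x := Pi.single i 1) (by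
    intro h
    have := congrFun h i
    simp at this)
  simpa [dotProduct, mulVec, Pi.single_apply, Finset.mul_sum, mul_comm] using h

lemma mySumSplit (i : n) (f : n → ℝ) :
    ∑ x, f x = f i + ∑ x : {x : n // x ≠ i}, f x.val := by
  rw [Fintype.sum_eq_add_sum_compl i]
  congr 1
  refine (Finset.sum_subtype (p := fun x => x ≠ i) ({i}ᶜ : Finset n) (fun x => ?_) f)
  simp

lemma myHatEq (K : Matrix n n ℝ) (hK : K.PosSemidef) {l : ℝ} (hl : 0 < l) :
    K * (K + l • 1)⁻¹ = 1 - l • (K + l • 1)⁻¹ := by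
  have hA : (K + l • (1 : Matrix n n ℝ)).PosDef := Matrix.PosDef.posSemidef_add hK (myPosDef_smul_one hl)
  have hdet : IsUnit (K + l • (1 : Matrix n n ℝ)).det := hA.det_pos.ne'.isUnit
  have h1 : K = (K + l • 1) - l • (1 : Matrix n n ℝ) := by abel
  calc K * (K + l • 1)⁻¹ = ((K + l • 1) - l • 1) * (K + l • 1)⁻¹ := by rw [← h1]
    _ = (K + l • 1) * (K + l • 1)⁻¹ - (l • 1) * (K + l • 1)⁻¹ := by rw [Matrix.sub_mul]
    _ = 1 - l • (K + l • 1)⁻¹ := by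
        rw [Matrix.mul_nonsing_inv _ hdet, Matrix.smul_mul, one_mul]

lemma myInvDiagPos (K : Matrix n n ℝ) (hK : K.PosSemidef) {l : ℝ} (hl : 0 < l) (i : n) :
    0 < (K + l • 1)⁻¹ i i := by
  have hA : (K + l • (1 : Matrix n n ℝ)).PosDef := Matrix.PosDef.posSemidef_add hK (myPosDef_smul_one hl)
  exact myDiagPos hA.inv i

lemma myHatDiagLt (K : Matrix n n ℝ) (hK : K.PosSemidef) {l : ℝ} (hl : 0 < l) (i : n) :
    (K * (K + l • 1)⁻¹) i i < 1 := by
  rw [myHatEq K hK hl]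
  have := myInvDiagPos K hK hl i
  have h1 : ((1 : Matrix n n ℝ) - l • (K + l • 1)⁻¹) i i
      = 1 - l * (K + l • 1)⁻¹ i i := by
    simp [Matrix.sub_apply, Matrix.one_apply]
  rw [h1]
  nlinarith

lemma myHatSymm (K : Matrix n n ℝ) (hK : K.PosSemidef) {l : ℝ} (hl : 0 < l) :
    (K * (K + l • 1)⁻¹)ᵀ = K * (K + l • 1)⁻¹ := by
  have hsymm : (K + l • (1 : Matrix n n ℝ))ᵀ = K + l • 1 := by
    have hKs : Kᵀ = K := hK.1
    simp [Matrix.transpose_add, Matrix.transpose_smul, hKs]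
  rw [myHatEq K hK hl, Matrix.transpose_sub, Matrix.transpose_smul,
    Matrix.transpose_nonsing_inv, hsymm, Matrix.transpose_one]

/-- Core one-sided leave-one-out identity. -/
lemma myCore (K : Matrix n n ℝ) (hK : K.PosSemidef) {l : ℝ} (hl : 0 < l) (i : n) (v : n → ℝ) :
    (fun x : {x : n // x ≠ i} => K i x.val) ⬝ᵥ
      ((K.submatrix (fun x : {x : n // x ≠ i} => x.val) (fun x => x.val) + l • 1)⁻¹
        *ᵥ fun x : {x : n // x ≠ i} => v x.val)
    = (((K * (K + l • 1)⁻¹) *ᵥ v) i - (K * (K + l • 1)⁻¹) i i * v i)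
        / (1 - (K * (K + l • 1)⁻¹) i i) := by
  set S := {x : n // x ≠ i}
  set A := K + l • (1 : Matrix n n ℝ) with hAdef
  have hA : A.PosDef := Matrix.PosDef.posSemidef_add hK (myPosDef_smul_one hl)
  have hdet : IsUnit A.det := hA.det_pos.ne'.isUnit
  set B := K.submatrix (fun x : S => x.val) (fun x : S => x.val)
      + l • (1 : Matrix S S ℝ) with hBdef
  have hBpsd : (K.submatrix (fun x : S => x.val) (fun x : S => x.val)).PosSemidef :=
    hK.submatrix _
  have hB : B.PosDef := Matrix.PosDef.posSemidef_add hBpsd (myPosDef_smul_one hl)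
  have hBdet : IsUnit B.det := hB.det_pos.ne'.isUnit
  have hKs : ∀ a b, K a b = K b a := by
    intro a b; conv_lhs => rw [← hK.1]
    simp [Matrix.transpose_apply]
  have hBA : ∀ x y : S, B x y = A x.val y.val := by
    intro x y
    have : (x = y) ↔ (x.val = y.val) := Subtype.ext_iff
    by_cases hxy : x = y
    · simp [hBdef, hAdef, Matrix.one_apply, hxy]
    · have hxy' : x.val ≠ y.val := fun h => hxy (Subtype.ext h)
      simp [hBdef, hAdef, Matrix.one_apply, hxy, hxy']
  set u := A⁻¹ *ᵥ v with hudef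
  set c := A⁻¹ *ᵥ Pi.single i 1 with hcdef
  have hu : A *ᵥ u = v := by
    rw [hudef, mulVec_mulVec, Matrix.mul_nonsing_inv _ hdet, one_mulVec]
  have hc : A *ᵥ c = Pi.single i 1 := by
    rw [hcdef, mulVec_mulVec, Matrix.mul_nonsing_inv _ hdet, one_mulVec]
  have hci : c i = A⁻¹ i i := by
    simp [hcdef, mulVec_single]
  have hcipos : 0 < c i := by rw [hci]; exact myDiagPos hA.inv i
  have hcine : c i ≠ 0 := hcipos.ne'
  -- split of mulVec
  have hsplit : ∀ (w : n → ℝ) (x : S),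
      (A *ᵥ w) x.val = A x.val i * w i + (B *ᵥ fun y : S => w y.val) x := by
    intro w x
    show ∑ y, A x.val y * w y = _
    rw [mySumSplit i (fun y => A x.val y * w y)]
    congr 1
    show ∑ y : S, A x.val y.val * w y.val = ∑ y : S, B x y * w y.val
    exact Finset.sum_congr rfl fun y _ => by rw [hBA]
  have hrow : ∀ (w : n → ℝ),
      (A *ᵥ w) i = A i i * w i
        + ((fun x : S => A x.val i) ⬝ᵥ fun y : S => w y.val) := by
    intro w
    show ∑ y, A i y * w y = _
    rw [mySumSplit i (fun y => A i y * w y)]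
    congr 1
    refine Finset.sum_congr rfl fun y _ => ?_
    have : A i y.val = A y.val i := by
      simp [hAdef, Matrix.one_apply, hKs i y.val, eq_comm]
    rw [this]
  have hAsym : ∀ a b, A a b = A b a := by
    intro a b; simp [hAdef, Matrix.one_apply, hKs a b, eq_comm]
  -- block relations
  have h1 : (B *ᵥ fun y : S => u y.val) = fun x : S => v x.val - A x.val i * u i := by
    funext x
    have h := hsplit u x
    rw [hu] at h
    linarith [h]
  have h2 : (B *ᵥ fun y : S => c y.val) = fun x : S => -(A x.val i * c i) := by
    funext x
    have h := hsplit c x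
    rw [hc] at h
    rw [Pi.single_eq_of_ne x.2] at h
    linarith [h]
  have h3 : A i i * u i + ((fun x : S => A x.val i) ⬝ᵥ fun y : S => u y.val) = v i := by
    rw [← hrow u, hu]
  have h4 : A i i * c i + ((fun x : S => A x.val i) ⬝ᵥ fun y : S => c y.val) = 1 := by
    rw [← hrow c, hc, Pi.single_eq_same]
  have hBinv : ∀ w : S → ℝ, B⁻¹ *ᵥ (B *ᵥ w) = w := by
    intro w
    rw [mulVec_mulVec, Matrix.nonsing_inv_mul _ hBdet, one_mulVec]
  -- solve
  have h5 : (fun x : S => v x.val)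
      = B *ᵥ (fun y : S => u y.val) + u i • (fun x : S => A x.val i) := by
    funext x
    simp [h1]
    ring
  have h6 : B⁻¹ *ᵥ (fun x : S => A x.val i) = (-(c i)⁻¹) • fun y : S => c y.val := by
    have hb : (fun x : S => A x.val i) = B *ᵥ ((-(c i)⁻¹) • fun y : S => c y.val) := by
      rw [mulVec_smul, h2]
      funext x
      simp
      field_simp
    rw [hb, hBinv]
  have h7 : B⁻¹ *ᵥ (fun x : S => v x.val)
      = fun x : S => u x.val - (u i / c i) * c x.val := by
    rw [h5, mulVec_add, mulVec_smul, hBinv, h6]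
    funext x
    simp
    ring
  -- compute LHS
  have hκA : (fun x : S => K i x.val) = fun x : S => A x.val i := by
    funext x
    have hx : x.val ≠ i := x.2
    simp [hAdef, Matrix.one_apply, hx, hKs i x.val]
  rw [hκA, h7]
  have hdot : ((fun x : S => A x.val i) ⬝ᵥ fun x : S => u x.val - u i / c i * c x.val)
      = ((fun x : S => A x.val i) ⬝ᵥ fun y : S => u y.val)
        - (u i / c i) * ((fun x : S => A x.val i) ⬝ᵥ fun y : S => c y.val) := by
    simp [dotProduct, Finset.mul_sum, mul_sub, Finset.sum_sub_distrib]
    exact Finset.sum_congr rfl fun y _ => by ring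
  rw [hdot]
  -- RHS computation
  have hhat : K * A⁻¹ = 1 - l • A⁻¹ := myHatEq K hK hl
  have hHv : ((K * A⁻¹) *ᵥ v) i = v i - l * u i := by
    rw [hhat, Matrix.sub_mulVec, Matrix.smul_mulVec, one_mulVec]
    simp [hudef]
  have hHii : (K * A⁻¹) i i = 1 - l * c i := by
    rw [hhat, hci]
    simp [Matrix.sub_apply, Matrix.one_apply]
  rw [show K * (K + l • 1)⁻¹ = K * A⁻¹ from rfl, hHv, hHii]
  have hd1 : ((fun x : S => A x.val i) ⬝ᵥ fun y : S => u y.val) = v i - A i i * u i := by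
    linarith [h3]
  have hd2 : ((fun x : S => A x.val i) ⬝ᵥ fun y : S => c y.val) = 1 - A i i * c i := by
    linarith [h4]
  rw [hd1, hd2]
  have hlne : l ≠ 0 := hl.ne'
  field_simp
  ring

lemma mySymEntries {M : Matrix n n ℝ} (hM : M.IsHermitian) (a b : n) : M a b = M b a := by
  conv_lhs => rw [← hM.eq]
  simp [Matrix.conjTranspose_apply]

lemma myDotSymm {p : Type*} [Fintype p] (N : Matrix p p ℝ) (hN : Nᵀ = N) (a b : p → ℝ) :
    a ⬝ᵥ (N *ᵥ b) = b ⬝ᵥ (N *ᵥ a) := by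
  rw [Matrix.dotProduct_mulVec, ← Matrix.mulVec_transpose, hN, dotProduct_comm]

end KRRAux

/-- leave-out shortcut for Setting D of two-step KRR: holding out
dyad `(i,j)` together with row `i` and column `j` of `Y` and predicting at `(i,j)`
gives `[H^k_{i·}(Y H^g_{·j} − Y_{·j} H^g_{jj}) − H^k_{ii}(Y_{i·} H^g_{·j} − Y_{ij} H^g_{jj})]
/ [(1 − H^k_{ii})(1 − H^g_{jj})]`. -/
theorem two_step_krr_stmt17 {m q : ℕ} (hm : 2 ≤ m) (hq : 2 ≤ q)
    (K : Matrix (Fin m) (Fin m) ℝ) (hK : K.PosSemidef)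
    (G : Matrix (Fin q) (Fin q) ℝ) (hG : G.PosSemidef)
    (Y : Matrix (Fin m) (Fin q) ℝ) (ld lt : ℝ) (hld : 0 < ld) (hlt : 0 < lt)
    (i : Fin m) (j : Fin q)
    (Hk : Matrix (Fin m) (Fin m) ℝ) (hHk : Hk = K * (K + ld • 1)⁻¹)
    (Hg : Matrix (Fin q) (Fin q) ℝ) (hHg : Hg = G * (G + lt • 1)⁻¹)
    (Kdel : Matrix {x : Fin m // x ≠ i} {x : Fin m // x ≠ i} ℝ)
    (hKdel : Kdel = K.submatrix (fun x => x.val) (fun x => x.val))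
    (Gdel : Matrix {x : Fin q // x ≠ j} {x : Fin q // x ≠ j} ℝ)
    (hGdel : Gdel = G.submatrix (fun x => x.val) (fun x => x.val))
    (Ydel : Matrix {x : Fin m // x ≠ i} {x : Fin q // x ≠ j} ℝ)
    (hYdel : Ydel = Y.submatrix (fun x => x.val) (fun x => x.val))
    (κ : {x : Fin m // x ≠ i} → ℝ) (hκ : κ = fun x => K i x.val)
    (γ : {x : Fin q // x ≠ j} → ℝ) (hγ : γ = fun x => G x.val j) :
    κ ⬝ᵥ (((Kdel + ld • 1)⁻¹ * Ydel * (Gdel + lt • 1)⁻¹) *ᵥ γ)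
      = ((Hk * Y * Hg) i j - (Hk * Y) i j * Hg j j
          - Hk i i * ((Y * Hg) i j - Y i j * Hg j j))
        / ((1 - Hk i i) * (1 - Hg j j)) := by
  subst hHk hHg hKdel hGdel hYdel hκ hγ
  set HK := K * (K + ld • 1)⁻¹ with hHKdef
  set HG := G * (G + lt • 1)⁻¹ with hHGdef
  have hd1 : (0:ℝ) < 1 - HK i i := by
    have := myHatDiagLt K hK hld i; rw [hHKdef]; linarith
  have hd2 : (0:ℝ) < 1 - HG j j := by
    have := myHatDiagLt G hG hlt j; rw [hHGdef]; linarith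
  have hHGsym : ∀ a b, HG a b = HG b a := by
    intro a b
    have h := myHatSymm G hG hlt
    rw [← hHGdef] at h
    conv_lhs => rw [← h]
    simp [Matrix.transpose_apply]
  set W : Fin m → ℝ :=
    fun x => ((Y * HG) x j - Y x j * HG j j) / (1 - HG j j) with hWdef
  -- symmetric inverse on the G side
  have hNsym : (((G.submatrix (fun x : {x : Fin q // x ≠ j} => x.val) fun x => x.val)
      + lt • 1)⁻¹)ᵀ = ((G.submatrix (fun x : {x : Fin q // x ≠ j} => x.val) fun x => x.val)
      + lt • 1)⁻¹ := by
    rw [Matrix.transpose_nonsing_inv]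
    congr 1
    have hGt : Gᵀ = G := hG.1
    rw [Matrix.transpose_add, Matrix.transpose_smul, Matrix.transpose_one,
      Matrix.transpose_submatrix, hGt]
  rw [← Matrix.mulVec_mulVec, ← Matrix.mulVec_mulVec]
  have hmid : (Y.submatrix (fun x : {x : Fin m // x ≠ i} => x.val) fun x => x.val) *ᵥ
      (((G.submatrix (fun x : {x : Fin q // x ≠ j} => x.val) fun x => x.val) + lt • 1)⁻¹
        *ᵥ fun x : {x : Fin q // x ≠ j} => G x.val j)
      = fun x : {x : Fin m // x ≠ i} => W x.val := by
    funext x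
    show (fun c : {c : Fin q // c ≠ j} => Y x.val c.val) ⬝ᵥ _ = _
    rw [myDotSymm _ hNsym]
    have hγ' : (fun c : {c : Fin q // c ≠ j} => G c.val j) = fun c => G j c.val :=
      funext fun c => mySymEntries hG.1 _ _
    rw [hγ']
    rw [myCore G hG hlt j (fun t => Y x.val t), ← hHGdef]
    have hrowG : (HG *ᵥ fun t => Y x.val t) j = (Y * HG) x.val j := by
      show ∑ t, HG j t * Y x.val t = _
      rw [Matrix.mul_apply]
      exact Finset.sum_congr rfl fun t _ => by rw [hHGsym j t]; ring
    rw [hrowG]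
    simp only [hWdef]
    rw [mul_comm (HG j j) (Y x.val j)]
  rw [hmid]
  rw [myCore K hK hld i W]
  rw [← hHKdef]
  have hHkW : (HK *ᵥ W) i
      = ((HK * (Y * HG)) i j - (HK * Y) i j * HG j j) / (1 - HG j j) := by
    show ∑ x, HK i x * W x = _
    rw [Matrix.mul_apply, Matrix.mul_apply, Finset.sum_mul, ← Finset.sum_sub_distrib,
      Finset.sum_div]
    refine Finset.sum_congr rfl fun x _ => ?_
    simp only [hWdef]
    rw [← mul_div_assoc]
    congr 1
    ring
  rw [hHkW]
  simp only [hWdef]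
  rw [← Matrix.mul_assoc]
  rw [← mul_div_assoc, ← sub_div, div_div, mul_comm (1 - HG j j) (1 - HK i i)]
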